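/- Let H be a finite-dimensional real inner product space, B ⊆ H a set of atoms each of norm 1, k > 1 an integer, A the k-simple subset relative to B, and Φ : H → ℝ^m a linear map having the (k, α, β)-generalized-weaken-RIP for distortions α, β > 0. Let x ∈ H be nonzero and let x = ∑_{b∈S} σ_b b be any representation with S ⊆ B finite and σ_b ≥ 0, and set γ = ∑_{b∈S} σ_b. Then ‖Φx‖₂² ≥ α²‖x‖² − γ²(β² − α²)/(k−1). -/

import Mathlib

open scoped BigOperators

/-- The `k`-simple subset relative to a set of atoms `B`. -/
def simpleSet {H : Type*} [AddCommGroup H] [Module ℝ H] (B : Set H) (k : ℕ) : Set H :=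
  { x | ∃ (σ : Fin k → ℝ) (b : Fin k → H),
      (∀ i, 0 ≤ σ i) ∧ (∀ i, b i ∈ B) ∧ x = ∑ i, σ i • b i }

section Aux
set_option linter.unusedSectionVars false

variable {H : Type*} [DecidableEq H] (S : Finset H) (p : H → ℝ)

lemma marg_single (hp1 : ∑ b ∈ S, p b = 1) {k : ℕ} (i : Fin k) (c : H → ℝ) :
    ∑ f ∈ Fintype.piFinset (fun _ : Fin k => S), (∏ l, p (f l)) * c (f i)
      = ∑ a ∈ S, p a * c a := by
  have key : ∀ f : Fin k → H, (∏ l, p (f l)) * c (f i)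
      = ∏ l, (fun l (y : H) => if l = i then p y * c y else p y) l (f l) := by
    intro f
    have A : ∏ l, (fun l (y : H) => if l = i then p y * c y else p y) l (f l)
        = (p (f i) * c (f i)) * ∏ l ∈ Finset.univ.erase i, p (f l) := by
      rw [← Finset.mul_prod_erase Finset.univ _ (Finset.mem_univ i)]
      simp only [if_pos rfl]
      congr 1
      exact Finset.prod_congr rfl (fun l hl => by simp [Finset.ne_of_mem_erase hl])
    have B : ∏ l, p (f l) = p (f i) * ∏ l ∈ Finset.univ.erase i, p (f l) :=
      (Finset.mul_prod_erase Finset.univ _ (Finset.mem_univ i)).symm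
    rw [A, B]; ring
  have h2 : ∀ l : Fin k, (∑ b ∈ S, (fun l (y : H) => if l = i then p y * c y else p y) l b)
      = if l = i then ∑ a ∈ S, p a * c a else 1 := by
    intro l; by_cases h : l = i <;> simp [h, hp1]
  calc ∑ f ∈ Fintype.piFinset (fun _ : Fin k => S), (∏ l, p (f l)) * c (f i)
      = ∑ f ∈ Fintype.piFinset (fun _ : Fin k => S),
          ∏ l, (fun l (y : H) => if l = i then p y * c y else p y) l (f l) :=
        Finset.sum_congr rfl (fun f _ => key f)
    _ = ∏ l, ∑ y ∈ S, (fun l (y : H) => if l = i then p y * c y else p y) l y :=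
        (Finset.prod_univ_sum (fun _ : Fin k => S) (fun l (y : H) => if l = i then p y * c y else p y)).symm
    _ = ∏ l : Fin k, if l = i then ∑ a ∈ S, p a * c a else 1 :=
        Finset.prod_congr rfl (fun l _ => h2 l)
    _ = ∑ a ∈ S, p a * c a := by
        rw [Finset.prod_ite_eq' Finset.univ i]; simp


lemma prod_two_ite {k : ℕ} {i j : Fin k} (hij : i ≠ j) (A B : Fin k → ℝ) :
    ∏ l, (if l = i then A l else if l = j then B l else 1) = A i * B j := by
  have h : ∀ l, (if l = i then A l else if l = j then B l else 1)
      = (if l = i then A l else 1) * (if l = j then B l else 1) := by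
    intro l
    by_cases h1 : l = i
    · subst h1; simp [hij]
    · by_cases h2 : l = j
      · subst h2; simp [h1, Ne.symm hij]
      · simp [h1, h2]
  rw [Finset.prod_congr rfl (fun l _ => h l), Finset.prod_mul_distrib,
    Finset.prod_ite_eq' Finset.univ i, Finset.prod_ite_eq' Finset.univ j]
  simp

lemma marg_pair (hp1 : ∑ b ∈ S, p b = 1) {k : ℕ} {i j : Fin k} (hij : i ≠ j) (c : H → H → ℝ) :
    ∑ f ∈ Fintype.piFinset (fun _ : Fin k => S), (∏ l, p (f l)) * c (f i) (f j)
      = ∑ a ∈ S, ∑ b ∈ S, (p a * p b) * c a b := by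
  set g : H → H → Fin k → H → ℝ := fun a b l y =>
    (if l = i then (if y = a then (1:ℝ) else 0)
      else if l = j then (if y = b then (1:ℝ) else 0) else 1) * p y with hg
  have hprod : ∀ (a b : H) (f : Fin k → H),
      ∏ l, g a b l (f l)
        = ((if f i = a then (1:ℝ) else 0) * (if f j = b then (1:ℝ) else 0)) * ∏ l, p (f l) := by
    intro a b f
    rw [hg]
    simp only
    rw [Finset.prod_mul_distrib,
      prod_two_ite hij (fun l => if f l = a then (1:ℝ) else 0) (fun l => if f l = b then (1:ℝ) else 0)]
  have expand : ∀ f ∈ Fintype.piFinset (fun _ : Fin k => S),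
      (∏ l, p (f l)) * c (f i) (f j)
        = ∑ a ∈ S, ∑ b ∈ S, (∏ l, g a b l (f l)) * c a b := by
    intro f hf
    have hfi : f i ∈ S := (Fintype.mem_piFinset.mp hf) i
    have hfj : f j ∈ S := (Fintype.mem_piFinset.mp hf) j
    have inner : ∀ a : H, ∑ b ∈ S, (∏ l, g a b l (f l)) * c a b
        = (if f i = a then (1:ℝ) else 0) * ((∏ l, p (f l)) * c a (f j)) := by
      intro a
      have : ∀ b ∈ S, (∏ l, g a b l (f l)) * c a b
          = if f j = b then (if f i = a then (1:ℝ) else 0) * ((∏ l, p (f l)) * c a b) else 0 := by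
        intro b _
        rw [hprod]
        by_cases h2 : f j = b <;> simp [h2]
      rw [Finset.sum_congr rfl this, Finset.sum_ite_eq S (f j)
        (fun b => (if f i = a then (1:ℝ) else 0) * ((∏ l, p (f l)) * c a b)), if_pos hfj]
    rw [Finset.sum_congr rfl (fun a _ => inner a)]
    have : ∀ a ∈ S, (if f i = a then (1:ℝ) else 0) * ((∏ l, p (f l)) * c a (f j))
        = if f i = a then (∏ l, p (f l)) * c a (f j) else 0 := by
      intro a _; by_cases h : f i = a <;> simp [h]
    rw [Finset.sum_congr rfl this, Finset.sum_ite_eq S (f i)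
      (fun a => (∏ l, p (f l)) * c a (f j)), if_pos hfi]
  rw [Finset.sum_congr rfl expand, Finset.sum_comm]
  refine Finset.sum_congr rfl (fun a ha => ?_)
  rw [Finset.sum_comm]
  refine Finset.sum_congr rfl (fun b hb => ?_)
  have hsum : ∑ f ∈ Fintype.piFinset (fun _ : Fin k => S), ∏ l, g a b l (f l)
      = ∏ l, ∑ y ∈ S, g a b l y := (Finset.prod_univ_sum (fun _ : Fin k => S) (g a b)).symm
  have hcol : ∀ l : Fin k, ∑ y ∈ S, g a b l y
      = if l = i then p a else if l = j then p b else 1 := by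
    intro l
    by_cases h1 : l = i
    · have hy : ∀ y ∈ S, g a b l y = if y = a then p y else 0 := by
        intro y _; by_cases h : y = a <;> simp [hg, h1, h]
      rw [Finset.sum_congr rfl hy, Finset.sum_ite_eq' S a p, if_pos ha, if_pos h1]
    · by_cases h2 : l = j
      · have hy : ∀ y ∈ S, g a b l y = if y = b then p y else 0 := by
          intro y _; by_cases h : y = b <;> simp [hg, h1, h2, h, Ne.symm hij]
        rw [Finset.sum_congr rfl hy, Finset.sum_ite_eq' S b p, if_pos hb, if_neg h1, if_pos h2]
      · have hy : ∀ y ∈ S, g a b l y = p y := fun y _ => by simp [hg, h1, h2]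
        rw [Finset.sum_congr rfl hy, hp1, if_neg h1, if_neg h2]
  rw [← Finset.sum_mul, hsum, Finset.prod_congr rfl (fun l _ => hcol l),
    prod_two_ite hij (fun _ => p a) (fun _ => p b)]

lemma second_moment {H E : Type*} [DecidableEq H] [NormedAddCommGroup E] [InnerProductSpace ℝ E]
    (S : Finset H) (p : H → ℝ) (hp1 : ∑ b ∈ S, p b = 1) {k : ℕ} (hk : 1 ≤ k) (A : H → E) :
    ∑ f ∈ Fintype.piFinset (fun _ : Fin k => S), (∏ l, p (f l)) * ‖∑ l, A (f l)‖ ^ 2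
      = ((k : ℝ) * ((k : ℝ) - 1)) * ‖∑ a ∈ S, p a • A a‖ ^ 2
        + (k : ℝ) * ∑ a ∈ S, p a * ‖A a‖ ^ 2 := by
  set D : ℝ := ∑ a ∈ S, p a * ‖A a‖ ^ 2 with hD
  set O : ℝ := ‖∑ a ∈ S, p a • A a‖ ^ 2 with hO
  have hOexp : O = ∑ a ∈ S, ∑ b ∈ S, (p a * p b) * (inner ℝ (A a) (A b) : ℝ) := by
    rw [hO, ← real_inner_self_eq_norm_sq, sum_inner]
    refine Finset.sum_congr rfl fun a _ => ?_
    rw [inner_sum]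
    refine Finset.sum_congr rfl fun b _ => ?_
    rw [real_inner_smul_left, real_inner_smul_right]; ring
  have hnorm : ∀ f : Fin k → H, (‖∑ l, A (f l)‖ ^ 2 : ℝ)
      = ∑ i : Fin k, ∑ j : Fin k, (inner ℝ (A (f i)) (A (f j)) : ℝ) := by
    intro f
    rw [← real_inner_self_eq_norm_sq, sum_inner]
    exact Finset.sum_congr rfl fun i _ => inner_sum _ _ _
  calc ∑ f ∈ Fintype.piFinset (fun _ : Fin k => S), (∏ l, p (f l)) * ‖∑ l, A (f l)‖ ^ 2
      = ∑ i : Fin k, ∑ j : Fin k, ∑ f ∈ Fintype.piFinset (fun _ : Fin k => S),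
          (∏ l, p (f l)) * (inner ℝ (A (f i)) (A (f j)) : ℝ) := by
        rw [Finset.sum_congr rfl fun f _ => by rw [hnorm f, Finset.mul_sum]]
        rw [Finset.sum_comm]
        refine Finset.sum_congr rfl fun i _ => ?_
        rw [Finset.sum_congr rfl fun f (_ : f ∈ _) => Finset.mul_sum _ _ _, Finset.sum_comm]
    _ = ∑ i : Fin k, ∑ j : Fin k, (if i = j then D else O) := by
        refine Finset.sum_congr rfl fun i _ => Finset.sum_congr rfl fun j _ => ?_
        by_cases h : i = j
        · subst h
          rw [if_pos rfl, marg_single S p hp1 i (fun y => (inner ℝ (A y) (A y) : ℝ)), hD]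
          exact Finset.sum_congr rfl fun a _ => by rw [real_inner_self_eq_norm_sq]
        · rw [if_neg h, hOexp, marg_pair S p hp1 h (fun y z => (inner ℝ (A y) (A z) : ℝ))]
    _ = ((k : ℝ) * ((k : ℝ) - 1)) * O + (k : ℝ) * D := by
        have row : ∀ i : Fin k, ∑ j : Fin k, (if i = j then D else O)
            = D + ((k : ℝ) - 1) * O := by
          intro i
          rw [← Finset.add_sum_erase Finset.univ _ (Finset.mem_univ i), if_pos rfl]
          congr 1
          rw [Finset.sum_congr rfl fun j hj => if_neg (Ne.symm (Finset.ne_of_mem_erase hj)),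
            Finset.sum_const, Finset.card_erase_of_mem (Finset.mem_univ i), Finset.card_univ,
            Fintype.card_fin, nsmul_eq_mul, Nat.cast_sub hk, Nat.cast_one]
        rw [Finset.sum_congr rfl fun i _ => row i, Finset.sum_const, Finset.card_univ,
          Fintype.card_fin, nsmul_eq_mul]
        ring

end Aux

/-- With unit-norm atoms and the weaken-RIP, for any nonnegative representation of `x`,
`‖Φx‖² ≥ α²‖x‖² − γ²(β² − α²)/(k−1)` where `γ` is the sum of the coefficients. -/
theorem maurey_inequality_unit_atoms
    {H : Type*} [NormedAddCommGroup H] [InnerProductSpace ℝ H] [FiniteDimensional ℝ H]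
    {m : ℕ} (B : Set H) (hBunit : ∀ b ∈ B, ‖b‖ = 1)
    (k : ℕ) (hk : 1 < k) (α β : ℝ) (hα : 0 < α) (hβ : 0 < β)
    (Φ : H →ₗ[ℝ] EuclideanSpace ℝ (Fin m))
    (hRIPa : ∀ u ∈ simpleSet B k, α * ‖u‖ ≤ ‖Φ u‖)
    (hRIPb : ∀ b ∈ B, ‖Φ b‖ ≤ β)
    (x : H) (hx : x ≠ 0)
    (S : Finset H) (σ : H → ℝ) (hSB : ↑S ⊆ B) (hσ : ∀ b ∈ S, 0 ≤ σ b)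
    (hrep : x = ∑ b ∈ S, σ b • b) :
    α ^ 2 * ‖x‖ ^ 2 - (∑ b ∈ S, σ b) ^ 2 * (β ^ 2 - α ^ 2) / ((k : ℝ) - 1)
      ≤ ‖Φ x‖ ^ 2 := by
  classical
  set γ : ℝ := ∑ b ∈ S, σ b with hγ
  have hγnn : 0 ≤ γ := Finset.sum_nonneg hσ
  have hγpos : 0 < γ := by
    rcases hγnn.lt_or_eq with h | h
    · exact h
    · exfalso; apply hx
      have hz : ∀ b ∈ S, σ b = 0 := (Finset.sum_eq_zero_iff_of_nonneg hσ).mp h.symm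
      rw [hrep]
      exact Finset.sum_eq_zero fun b hb => by rw [hz b hb, zero_smul]
  have hγne : γ ≠ 0 := ne_of_gt hγpos
  set p : H → ℝ := fun b => σ b / γ with hp
  have hp1 : ∑ b ∈ S, p b = 1 := by
    rw [hp]; simp only; rw [← Finset.sum_div, ← hγ, div_self hγne]
  have hpnn : ∀ b ∈ S, 0 ≤ p b := fun b hb => div_nonneg (hσ b hb) hγnn
  have hK1 : (1 : ℝ) < (k : ℝ) := by exact_mod_cast hk
  have hK0 : (0 : ℝ) < (k : ℝ) := lt_trans one_pos hK1
  have hk1 : 1 ≤ k := le_of_lt hk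
  -- the averaged RIP inequality
  have hwnn : ∀ f ∈ Fintype.piFinset (fun _ : Fin k => S), 0 ≤ ∏ l, p (f l) := by
    intro f hf
    exact Finset.prod_nonneg fun l _ => hpnn (f l) ((Fintype.mem_piFinset.mp hf) l)
  have hpoint : ∀ f ∈ Fintype.piFinset (fun _ : Fin k => S),
      α ^ 2 * ‖∑ l, f l‖ ^ 2 ≤ ‖Φ (∑ l, f l)‖ ^ 2 := by
    intro f hf
    have hfS : ∀ l, f l ∈ S := Fintype.mem_piFinset.mp hf
    set t : ℝ := γ / k with ht
    have htpos : 0 < t := div_pos hγpos hK0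
    have hmem : t • (∑ l, f l) ∈ simpleSet B k :=
      ⟨fun _ => t, f, fun _ => le_of_lt htpos, fun l => hSB (hfS l),
        by rw [Finset.smul_sum]⟩
    have h1 := hRIPa _ hmem
    rw [norm_smul, map_smul, norm_smul, Real.norm_eq_abs, abs_of_pos htpos,
      ← mul_assoc, mul_comm α t, mul_assoc] at h1
    have h2 : α * ‖∑ l, f l‖ ≤ ‖Φ (∑ l, f l)‖ := le_of_mul_le_mul_left h1 htpos
    have h3 := mul_le_mul h2 h2 (by positivity) (norm_nonneg _)
    calc α ^ 2 * ‖∑ l, f l‖ ^ 2 = (α * ‖∑ l, f l‖) * (α * ‖∑ l, f l‖) := by ring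
      _ ≤ ‖Φ (∑ l, f l)‖ * ‖Φ (∑ l, f l)‖ := h3
      _ = ‖Φ (∑ l, f l)‖ ^ 2 := by ring
  have havg : ∑ f ∈ Fintype.piFinset (fun _ : Fin k => S),
        (∏ l, p (f l)) * (α ^ 2 * ‖∑ l, f l‖ ^ 2)
      ≤ ∑ f ∈ Fintype.piFinset (fun _ : Fin k => S),
        (∏ l, p (f l)) * ‖Φ (∑ l, f l)‖ ^ 2 :=
    Finset.sum_le_sum fun f hf =>
      mul_le_mul_of_nonneg_left (hpoint f hf) (hwnn f hf)
  -- identify both sides via the second moment identity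
  have T1 : ∑ f ∈ Fintype.piFinset (fun _ : Fin k => S), (∏ l, p (f l)) * ‖∑ l, f l‖ ^ 2
      = ((k : ℝ) * ((k : ℝ) - 1)) * ‖∑ a ∈ S, p a • a‖ ^ 2
        + (k : ℝ) * ∑ a ∈ S, p a * ‖a‖ ^ 2 :=
    second_moment S p hp1 hk1 (fun y : H => y)
  have T2 : ∑ f ∈ Fintype.piFinset (fun _ : Fin k => S),
        (∏ l, p (f l)) * ‖∑ l, Φ (f l)‖ ^ 2
      = ((k : ℝ) * ((k : ℝ) - 1)) * ‖∑ a ∈ S, p a • Φ a‖ ^ 2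
        + (k : ℝ) * ∑ a ∈ S, p a * ‖Φ a‖ ^ 2 :=
    second_moment S p hp1 hk1 (fun y : H => Φ y)
  have hΦsum : ∀ f : Fin k → H, ‖Φ (∑ l, f l)‖ ^ 2 = ‖∑ l, Φ (f l)‖ ^ 2 := by
    intro f; rw [map_sum]
  have hdiag1 : ∑ a ∈ S, p a * ‖a‖ ^ 2 = 1 := by
    rw [Finset.sum_congr rfl fun a ha => by
      rw [hBunit a (hSB ha), one_pow, mul_one], hp1]
  have hdiag2 : ∑ a ∈ S, p a * ‖Φ a‖ ^ 2 ≤ β ^ 2 := by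
    calc ∑ a ∈ S, p a * ‖Φ a‖ ^ 2 ≤ ∑ a ∈ S, p a * β ^ 2 :=
        Finset.sum_le_sum fun a ha => mul_le_mul_of_nonneg_left
          (by nlinarith [hRIPb a (hSB ha), norm_nonneg (Φ a)]) (hpnn a ha)
      _ = β ^ 2 := by rw [← Finset.sum_mul, hp1, one_mul]
  -- identify the means
  have hμ : ∑ a ∈ S, p a • a = γ⁻¹ • x := by
    rw [hrep, Finset.smul_sum]
    exact Finset.sum_congr rfl fun a _ => by rw [smul_smul, hp]; congr 1; field_simp
  have hΦμ : ∑ a ∈ S, p a • Φ a = Φ (γ⁻¹ • x) := by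
    rw [← hμ, map_sum]
    exact (Finset.sum_congr rfl fun a _ => by rw [map_smul]).symm
  set a : ℝ := ‖γ⁻¹ • x‖ ^ 2 with haa
  set c : ℝ := ‖Φ (γ⁻¹ • x)‖ ^ 2 with hcc
  have hxμ : x = γ • (γ⁻¹ • x) := by rw [smul_smul, mul_inv_cancel₀ hγne, one_smul]
  have hNa : ‖x‖ ^ 2 = γ ^ 2 * a := by
    rw [haa]; conv_lhs => rw [hxμ]
    rw [norm_smul, Real.norm_eq_abs, abs_of_pos hγpos, mul_pow]
  have hMc : ‖Φ x‖ ^ 2 = γ ^ 2 * c := by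
    rw [hcc]; conv_lhs => rw [hxμ]
    rw [map_smul, norm_smul, Real.norm_eq_abs, abs_of_pos hγpos, mul_pow]
  -- main inequality in normalized form
  have hmain : α ^ 2 * ((k : ℝ) * ((k : ℝ) - 1) * a + (k : ℝ))
      ≤ (k : ℝ) * ((k : ℝ) - 1) * c + (k : ℝ) * β ^ 2 := by
    have lhs_eq : ∑ f ∈ Fintype.piFinset (fun _ : Fin k => S),
          (∏ l, p (f l)) * (α ^ 2 * ‖∑ l, f l‖ ^ 2)
        = α ^ 2 * ((k : ℝ) * ((k : ℝ) - 1) * a + (k : ℝ)) := by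
      have step : ∑ f ∈ Fintype.piFinset (fun _ : Fin k => S),
            (∏ l, p (f l)) * (α ^ 2 * ‖∑ l, f l‖ ^ 2)
          = α ^ 2 * ∑ f ∈ Fintype.piFinset (fun _ : Fin k => S),
            (∏ l, p (f l)) * ‖∑ l, f l‖ ^ 2 := by
        rw [Finset.mul_sum]
        exact Finset.sum_congr rfl fun f _ => by ring
      rw [step, T1, hμ, hdiag1, ← haa]
      ring
    have rhs_eq : ∑ f ∈ Fintype.piFinset (fun _ : Fin k => S),
          (∏ l, p (f l)) * ‖Φ (∑ l, f l)‖ ^ 2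
        ≤ (k : ℝ) * ((k : ℝ) - 1) * c + (k : ℝ) * β ^ 2 := by
      rw [Finset.sum_congr rfl fun f _ => by rw [hΦsum f], T2, hΦμ, ← hcc]
      have := mul_le_mul_of_nonneg_left hdiag2 (le_of_lt hK0)
      linarith
    calc α ^ 2 * ((k : ℝ) * ((k : ℝ) - 1) * a + (k : ℝ)) = _ := lhs_eq.symm
      _ ≤ _ := havg
      _ ≤ _ := rhs_eq
  -- final algebra
  rw [hNa, hMc]
  have hK1' : (0 : ℝ) < (k : ℝ) - 1 := by linarith
  have h' := mul_le_mul_of_nonneg_left hmain (sq_nonneg γ)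
  have hkey2 : (k : ℝ) * (α ^ 2 * (γ ^ 2 * a) * ((k : ℝ) - 1) - γ ^ 2 * (β ^ 2 - α ^ 2))
      ≤ (k : ℝ) * ((γ ^ 2 * c) * ((k : ℝ) - 1)) := by nlinarith [h']
  have hkey : α ^ 2 * (γ ^ 2 * a) * ((k : ℝ) - 1) - γ ^ 2 * (β ^ 2 - α ^ 2)
      ≤ (γ ^ 2 * c) * ((k : ℝ) - 1) := le_of_mul_le_mul_left hkey2 hK0
  calc α ^ 2 * (γ ^ 2 * a) - γ ^ 2 * (β ^ 2 - α ^ 2) / ((k : ℝ) - 1)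
      = (α ^ 2 * (γ ^ 2 * a) * ((k : ℝ) - 1) - γ ^ 2 * (β ^ 2 - α ^ 2)) / ((k : ℝ) - 1) := by
        field_simp
    _ ≤ ((γ ^ 2 * c) * ((k : ℝ) - 1)) / ((k : ℝ) - 1) :=
        (div_le_div_iff_of_pos_right hK1').mpr hkey
    _ = γ ^ 2 * c := by field_simp
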